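/- In the semidirect product K = N ⋊ G, the intersection of the commutator subgroup [K, K] with N is exactly the augmentation-zero subspace: {α : G → ℤ/pℤ : (α, 1) ∈ [K, K]} = {α : Σ_{g ∈ G} α(g) = 0}. -/

import Mathlib

open Multiplicative

/-- The shift action of `g : G` on functions `G → R`: `(g · α)(h) = α (g⁻¹h)`. -/
def regAct {G : Type*} (R : Type*) [Group G] [AddCommGroup R] (g : G) :
    (G → R) ≃+ (G → R) where
  toFun α := fun x => α (g⁻¹ * x)
  invFun α := fun x => α (g * x)
  left_inv := by intro α; funext x; simp
  right_inv := by intro α; funext x; simp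
  map_add' := by intro α β; rfl

/-- The action of `G` on the (multiplicatively written) additive group `N` of
the group algebra `𝔽_p[G]` (functions `G → R`), as a homomorphism into the
automorphism group; it is used to form the semidirect product `K = N ⋊ G`. -/
def regHom (G R : Type*) [Group G] [AddCommGroup R] :
    G →* MulAut (Multiplicative (G → R)) where
  toFun g := AddEquiv.toMultiplicative (regAct R g)
  map_one' := by
    apply MulEquiv.ext
    intro α
    apply Multiplicative.toAdd.injective
    funext x
    simp [regAct, AddEquiv.toMultiplicative]
  map_mul' := by
    intro g h
    apply MulEquiv.ext
    intro α
    apply Multiplicative.toAdd.injective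
    funext x
    simp [regAct, AddEquiv.toMultiplicative, mul_assoc]

/-- In `K = 𝔽_p[G] ⋊ G`, the intersection of the commutator
subgroup with `N = 𝔽_p[G]` is the augmentation-zero subspace. -/
theorem commutator_meet_group_algebra
    {G : Type*} [Group G] [Fintype G] (p : ℕ) (hp : p.Prime)
    (α : G → ZMod p) :
    (⟨ofAdd α, (1 : G)⟩ : Multiplicative (G → ZMod p) ⋊[regHom G (ZMod p)] G) ∈
        commutator (Multiplicative (G → ZMod p) ⋊[regHom G (ZMod p)] G) ↔
      ∑ g : G, α g = 0 := by
  classical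
  set K := Multiplicative (G → ZMod p) ⋊[regHom G (ZMod p)] G with hK
  let σ : (G → ZMod p) →+ ZMod p :=
    { toFun := fun β => ∑ g, β g
      map_zero' := by simp
      map_add' := by intro a b; simp [Finset.sum_add_distrib] }
  let f : Multiplicative (G → ZMod p) →* Multiplicative (ZMod p) :=
    AddMonoidHom.toMultiplicative σ
  have hcompat : ∀ (g : G) (n : Multiplicative (G → ZMod p)),
      f ((regHom G (ZMod p)) g n) = f n := by
    intro g n
    have : ∑ x : G, toAdd n (g⁻¹ * x) = ∑ x : G, toAdd n x :=
      Fintype.sum_equiv (Equiv.mulLeft g⁻¹) _ _ (fun x => rfl)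
    simpa [f, σ, AddMonoidHom.toMultiplicative, regHom, regAct,
      AddEquiv.toMultiplicative] using congrArg ofAdd this
  let φ : K →* Multiplicative (ZMod p) :=
    SemidirectProduct.lift f 1 (by
      intro g
      apply MonoidHom.ext
      intro n
      simp [hcompat g n])
  constructor
  · intro hmem
    have h1 : φ ⟨ofAdd α, (1 : G)⟩ = 1 := by
      have : commutator K ≤ φ.ker := Abelianization.commutator_subset_ker φ
      exact this hmem
    have h2 : φ ⟨ofAdd α, (1 : G)⟩ = ofAdd (∑ g, α g) := by
      simp [φ, f, σ, SemidirectProduct.lift]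
    rw [h2] at h1
    exact ofAdd_eq_one.mp h1
  · intro hsum
    -- key: each single difference is a commutator
    have key : ∀ (g : G) (c : ZMod p),
        (⟨ofAdd ((Pi.single g c : G → ZMod p) - Pi.single (1:G) c), (1 : G)⟩ : K) ∈ commutator K := by
      intro g c
      open scoped commutatorElement in
      have hc : (⟨ofAdd ((Pi.single g c : G → ZMod p) - Pi.single (1:G) c), (1 : G)⟩ : K) =
          ⁅(SemidirectProduct.inr g : K),
            SemidirectProduct.inl (ofAdd (Pi.single 1 c : G → ZMod p))⁆ := by
        rw [commutatorElement_def]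
        rw [← map_inv SemidirectProduct.inr g, ← SemidirectProduct.inl_aut,
          ← map_inv SemidirectProduct.inl, ← map_mul]
        congr 1
        have : (regHom G (ZMod p)) g (ofAdd (Pi.single 1 c : G → ZMod p)) =
            ofAdd (Pi.single g c : G → ZMod p) := by
          apply Multiplicative.toAdd.injective
          funext x
          show (Pi.single (1 : G) c : G → ZMod p) (g⁻¹ * x) = (Pi.single g c : G → ZMod p) x
          rw [Pi.single_apply, Pi.single_apply]
          congr 1
          simp [eq_iff_iff, inv_mul_eq_one, eq_comm]
        rw [this]
        apply Multiplicative.toAdd.injective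
        simp [sub_eq_add_neg]
      rw [hc, commutator_def]
      exact Subgroup.commutator_mem_commutator (Subgroup.mem_top _) (Subgroup.mem_top _)
    have hα : α = ∑ g : G, ((Pi.single g (α g) : G → ZMod p) - Pi.single (1:G) (α g)) := by
      rw [Finset.sum_sub_distrib]
      rw [Finset.univ_sum_single]
      have : ∑ g : G, (Pi.single (1:G) (α g) : G → ZMod p) = Pi.single (1:G) (∑ g, α g) := by
        funext x
        by_cases hx : x = 1 <;> simp [Finset.sum_apply, Pi.single_apply, hx]
      rw [this, hsum]
      simp
    suffices h : ofAdd α ∈ (commutator K).comap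
        (SemidirectProduct.inl (φ := regHom G (ZMod p))) from h
    rw [hα, ofAdd_sum]
    exact Subgroup.prod_mem _ (fun g _ => key g (α g))
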